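/- For integers N, m, r with 2 ≤ r < m ≤ N/2, one has sin(πm/N)·sin(πr/N) > sin(π/N)·|sin(πmr/N)|. -/

import Mathlib

open Real

private lemma sin_two_step (a : ℝ) (n : ℕ) :
    Real.sin (((n : ℝ) + 2) * a) = Real.sin ((n : ℝ) * a)
      + 2 * Real.sin a * Real.cos (((n : ℝ) + 1) * a) := by
  have h1 : ((n : ℝ) + 2) * a = ((n : ℝ) + 1) * a + a := by ring
  have h2 : (n : ℝ) * a = ((n : ℝ) + 1) * a - a := by ring
  rw [h1, h2, Real.sin_add, Real.sin_sub]; ring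

private lemma sin_key (n : ℕ) (θ φ : ℝ) (h0 : 0 ≤ θ) (hθφ : θ ≤ φ)
    (h : (n : ℝ) * φ ≤ π / 2) :
    Real.sin θ * Real.sin ((n : ℝ) * φ) ≤ Real.sin ((n : ℝ) * θ) * Real.sin φ := by
  induction n using Nat.twoStepInduction with
  | zero => simp
  | one => simp [mul_comm]
  | more n ih _ =>
    have hφ0 : 0 ≤ φ := h0.trans hθφ
    have hπ : (0:ℝ) < π := Real.pi_pos
    push_cast at h ⊢
    have hnφ : (n : ℝ) * φ ≤ π / 2 := by nlinarith [Nat.cast_nonneg (α := ℝ) n]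
    have ihn := ih hnφ
    have hφhalf : φ ≤ π / 2 := by nlinarith [Nat.cast_nonneg (α := ℝ) n]
    have hsθ : 0 ≤ Real.sin θ :=
      Real.sin_nonneg_of_nonneg_of_le_pi h0 (by linarith)
    have hsφ : 0 ≤ Real.sin φ :=
      Real.sin_nonneg_of_nonneg_of_le_pi hφ0 (by linarith)
    have hcos : Real.cos (((n : ℝ) + 1) * φ) ≤ Real.cos (((n : ℝ) + 1) * θ) := by
      apply Real.cos_le_cos_of_nonneg_of_le_pi
      · positivity
      · nlinarith [Nat.cast_nonneg (α := ℝ) n]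
      · nlinarith [Nat.cast_nonneg (α := ℝ) n]
    rw [sin_two_step φ n, sin_two_step θ n]
    nlinarith [mul_le_mul_of_nonneg_left hcos (mul_nonneg hsθ hsφ)]

private lemma sin_key_strict (n : ℕ) (hn : 2 ≤ n) (θ φ : ℝ) (h0 : 0 < θ) (hθφ : θ < φ)
    (h : (n : ℝ) * φ ≤ π / 2) :
    Real.sin θ * Real.sin ((n : ℝ) * φ) < Real.sin ((n : ℝ) * θ) * Real.sin φ := by
  obtain ⟨j, rfl⟩ : ∃ j, n = j + 2 := ⟨n - 2, by omega⟩
  have hπ : (0:ℝ) < π := Real.pi_pos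
  have hj0 : (0:ℝ) ≤ (j : ℝ) := Nat.cast_nonneg _
  push_cast at h ⊢
  have hφ0 : 0 < φ := h0.trans hθφ
  have hjφ : (j : ℝ) * φ ≤ π / 2 := by nlinarith
  have hφhalf : φ ≤ π / 2 := by nlinarith
  have ihn := sin_key j θ φ h0.le hθφ.le hjφ
  push_cast at ihn
  have hsθ : 0 < Real.sin θ :=
    Real.sin_pos_of_pos_of_lt_pi h0 (by linarith)
  have hsφ : 0 < Real.sin φ :=
    Real.sin_pos_of_pos_of_lt_pi hφ0 (by linarith)
  have hcos : Real.cos (((j : ℝ) + 1) * φ) < Real.cos (((j : ℝ) + 1) * θ) := by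
    apply Real.cos_lt_cos_of_nonneg_of_le_pi
    · positivity
    · nlinarith
    · nlinarith
  rw [sin_two_step φ j, sin_two_step θ j]
  nlinarith [mul_lt_mul_of_pos_left hcos (mul_pos hsθ hsφ)]

/-- For integers `N, m, r` with `2 ≤ r < m ≤ N/2`, one has
`sin(πm/N)·sin(πr/N) > sin(π/N)·|sin(πmr/N)|`. -/
theorem sin_diag_ineq (N m r : ℕ) (hr : 2 ≤ r) (hrm : r < m) (hmN : 2 * m ≤ N) :
    Real.sin (Real.pi / N) * |Real.sin (Real.pi * m * r / N)| <
      Real.sin (Real.pi * m / N) * Real.sin (Real.pi * r / N) := by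
  have hπ : (0:ℝ) < π := Real.pi_pos
  have hm3 : 3 ≤ m := by omega
  have hN : 6 ≤ N := by omega
  have hNR : (6:ℝ) ≤ (N:ℝ) := by exact_mod_cast hN
  have hmR : (3:ℝ) ≤ (m:ℝ) := by exact_mod_cast hm3
  have hrR : (2:ℝ) ≤ (r:ℝ) := by exact_mod_cast hr
  have hrmR : (r:ℝ) + 1 ≤ (m:ℝ) := by exact_mod_cast hrm
  have hmNR : 2 * (m:ℝ) ≤ (N:ℝ) := by exact_mod_cast hmN
  have hNpos : (0:ℝ) < N := by linarith
  set θ : ℝ := π / N with hθdef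
  set φ : ℝ := π * m / N with hφdef
  have hθpos : 0 < θ := by positivity
  have hθφ : θ < φ := by
    rw [hθdef, hφdef]
    rw [div_lt_div_iff₀ hNpos hNpos]
    have h1 : (1:ℝ) < m := by linarith
    nlinarith [mul_pos hπ hNpos]
  have hφhalf : φ ≤ π / 2 := by
    rw [hφdef, div_le_div_iff₀ hNpos (by norm_num : (0:ℝ) < 2)]
    nlinarith
  have hre : Real.pi * m * r / N = (r : ℝ) * φ := by rw [hφdef]; ring
  have hre2 : Real.pi * r / N = (r : ℝ) * θ := by rw [hθdef]; ring
  have hrθ : (r : ℝ) * θ < π / 2 := by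
    rw [hθdef]
    rw [mul_div_assoc', div_lt_div_iff₀ hNpos (by norm_num : (0:ℝ) < 2)]
    nlinarith
  rw [hre, hre2]
  by_cases hcase : (r : ℝ) * φ ≤ π / 2
  · have hnn : 0 ≤ Real.sin ((r : ℝ) * φ) := by
      apply Real.sin_nonneg_of_nonneg_of_le_pi
      · positivity
      · linarith
    rw [abs_of_nonneg hnn]
    have := sin_key_strict r hr θ φ hθpos hθφ hcase
    linarith [this]
  · push_neg at hcase
    have hrpos : (0:ℝ) < r := by linarith
    have hsrθ : 0 < Real.sin ((r : ℝ) * θ) := by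
      apply Real.sin_pos_of_pos_of_lt_pi
      · positivity
      · linarith
    have hkey : Real.sin θ ≤ Real.sin ((r : ℝ) * θ) * Real.sin (π / (2 * r)) := by
      have h1 : θ ≤ π / (2 * r) := by
        rw [le_div_iff₀ (by positivity)]
        calc θ * (2 * r) = 2 * ((r:ℝ) * θ) := by ring
        _ ≤ 2 * (π / 2) := by linarith
        _ = π := by ring
      have h2 : (r : ℝ) * (π / (2 * r)) ≤ π / 2 := by
        rw [mul_div_assoc']
        rw [div_le_div_iff₀ (by positivity) (by norm_num : (0:ℝ) < 2)]
        ring_nf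
        nlinarith
      have := sin_key r θ (π / (2 * r)) hθpos.le h1 h2
      have heq : (r : ℝ) * (π / (2 * r)) = π / 2 := by
        field_simp
      rw [heq, Real.sin_pi_div_two, mul_one] at this
      exact this
    have hlt : Real.sin (π / (2 * r)) < Real.sin φ := by
      apply Real.sin_lt_sin_of_lt_of_le_pi_div_two
      · have : (0:ℝ) < π / (2 * r) := by positivity
        linarith
      · exact hφhalf
      · rw [div_lt_iff₀ (by positivity)]
        nlinarith
    have hsθ : 0 ≤ Real.sin θ := by
      apply Real.sin_nonneg_of_nonneg_of_le_pi hθpos.le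
      linarith
    calc Real.sin θ * |Real.sin ((r:ℝ) * φ)| ≤ Real.sin θ * 1 := by
          apply mul_le_mul_of_nonneg_left _ hsθ
          exact abs_sin_le_one _
      _ = Real.sin θ := mul_one _
      _ ≤ Real.sin ((r : ℝ) * θ) * Real.sin (π / (2 * r)) := hkey
      _ < Real.sin ((r : ℝ) * θ) * Real.sin φ := by
          exact mul_lt_mul_of_pos_left hlt hsrθ
      _ = Real.sin φ * Real.sin ((r : ℝ) * θ) := mul_comm _ _
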